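/- Let μ be a probability distribution on ℝ^d, let 0 < α < 1 and A > 0, and let η : ℝ^d → [0, 1/2] be a measurable function such that for every 0 < t ≤ 1/2, μ({x : η(x) ≥ 1/2 − t}) ≤ A · t^{α/(1−α)}. Then for every measurable set S ⊆ ℝ^d, E_{x∼μ}[1_S(x) · (1 − 2η(x))] ≥ C_α^A · (μ(S))^{1/α}, where C_α^A := α · ((1−α)/A)^{(1−α)/α}. -/

import Mathlib

open MeasureTheory

theorem stmt1 {d : ℕ} (μ : Measure (EuclideanSpace ℝ (Fin d))) [IsProbabilityMeasure μ]
    (α A : ℝ) (hα : 0 < α) (hα1 : α < 1) (hA : 0 < A)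
    (η : EuclideanSpace ℝ (Fin d) → ℝ)
    (hηm : Measurable η) (hη0 : ∀ x, 0 ≤ η x) (hη2 : ∀ x, η x ≤ 1/2)
    (hTsy : ∀ t : ℝ, 0 < t → t ≤ 1/2 →
      (μ {x | 1/2 - t ≤ η x}).toReal ≤ A * t ^ (α / (1 - α)))
    (S : Set (EuclideanSpace ℝ (Fin d))) (hS : MeasurableSet S) :
    α * ((1 - α) / A) ^ ((1 - α) / α) * (μ S).toReal ^ (1 / α)
      ≤ ∫ x, S.indicator (fun _ => (1 : ℝ)) x * (1 - 2 * η x) ∂μ := by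
  set m := (μ S).toReal with hm
  have h1α : (0:ℝ) < 1 - α := by linarith
  have hm0 : 0 ≤ m := ENNReal.toReal_nonneg
  have hm1 : m ≤ 1 := by
    have h := prob_le_one (μ := μ) (s := S)
    have := ENNReal.toReal_mono (by norm_num) h
    simpa using this
  have hnn : ∀ x, 0 ≤ S.indicator (fun _ => (1:ℝ)) x * (1 - 2 * η x) := by
    intro x
    have h1 : 0 ≤ S.indicator (fun _ => (1:ℝ)) x :=
      Set.indicator_nonneg (fun _ _ => zero_le_one) x
    have h2 : 0 ≤ 1 - 2 * η x := by have := hη2 x; linarith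
    exact mul_nonneg h1 h2
  have hmeasf : Measurable (fun x => S.indicator (fun _ => (1:ℝ)) x * (1 - 2 * η x)) :=
    (measurable_const.indicator hS).mul
      ((measurable_const.sub (hηm.const_mul 2)))
  have hInt : Integrable (fun x => S.indicator (fun _ => (1:ℝ)) x * (1 - 2 * η x)) μ := by
    refine Integrable.mono' (integrable_const (1:ℝ)) hmeasf.aestronglyMeasurable
      (ae_of_all _ fun x => ?_)
    have h2 : 1 - 2 * η x ≤ 1 := by have := hη0 x; linarith
    have h1 : S.indicator (fun _ => (1:ℝ)) x ≤ 1 :=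
      Set.indicator_le_self' (fun _ _ => zero_le_one) x |>.trans (by
        by_cases hx : x ∈ S <;> simp [hx])
    rw [Real.norm_eq_abs, abs_of_nonneg (hnn x)]
    calc S.indicator (fun _ => (1:ℝ)) x * (1 - 2 * η x)
        ≤ 1 * 1 := by
          apply mul_le_mul h1 h2 (by have := hη2 x; linarith)
            zero_le_one
      _ = 1 := by ring
  rcases eq_or_lt_of_le hm0 with h0 | hmpos
  · rw [← h0, Real.zero_rpow (by positivity), mul_zero]
    exact integral_nonneg hnn
  · set t : ℝ := ((1 - α) * m / A) ^ ((1 - α) / α) with ht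
    have hbpos : 0 < (1 - α) * m / A := by positivity
    have htpos : 0 < t := Real.rpow_pos_of_pos hbpos _
    have hA2 : 1 ≤ A * (1/2:ℝ) ^ (α / (1 - α)) := by
      have h := hTsy (1/2) (by norm_num) le_rfl
      have huniv : {x | 1/2 - 1/2 ≤ η x} = Set.univ := by
        ext x; simp; linarith [hη0 x]
      rw [huniv] at h
      simpa using h
    have ht2 : t ≤ 1/2 := by
      have hAinv : 1 / A ≤ (1/2:ℝ) ^ (α / (1 - α)) := by
        rw [div_le_iff₀ hA] at *
        linarith [hA2]
      have hbase : (1 - α) * m / A ≤ (1/2:ℝ) ^ (α / (1 - α)) := by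
        calc (1 - α) * m / A ≤ 1 / A :=
              (div_le_div_iff_of_pos_right hA).mpr (by nlinarith)
          _ ≤ _ := hAinv
      calc t ≤ ((1/2:ℝ) ^ (α / (1 - α))) ^ ((1 - α) / α) :=
            Real.rpow_le_rpow (le_of_lt hbpos) hbase (by positivity)
        _ = (1/2:ℝ) := by
            rw [← Real.rpow_mul (by norm_num)]
            rw [show α / (1 - α) * ((1 - α) / α) = 1 by field_simp]
            exact Real.rpow_one _
    have htβ : A * t ^ (α / (1 - α)) = (1 - α) * m := by
      rw [ht, ← Real.rpow_mul (le_of_lt hbpos)]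
      rw [show (1 - α) / α * (α / (1 - α)) = 1 by field_simp]
      rw [Real.rpow_one]
      field_simp
    set E := {x | η x ≤ 1/2 - t} with hE
    have hEm : MeasurableSet E := measurableSet_le hηm measurable_const
    have hcompl : (μ Eᶜ).toReal ≤ (1 - α) * m := by
      rw [← htβ]
      have hsub : Eᶜ ⊆ {x | 1/2 - t ≤ η x} := by
        intro x hx
        simp only [hE, Set.mem_compl_iff, Set.mem_setOf_eq, not_le] at hx ⊢
        linarith
      exact le_trans
        (ENNReal.toReal_mono (measure_ne_top _ _) (measure_mono hsub))
        (hTsy t htpos ht2)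
    have hmeas2 : α * m ≤ (μ (S ∩ E)).toReal := by
      have h1 : μ S ≤ μ (S ∩ E) + μ Eᶜ := by
        calc μ S ≤ μ ((S ∩ E) ∪ Eᶜ) := by
              apply measure_mono
              intro x hx
              by_cases h : x ∈ E
              · exact Or.inl ⟨hx, h⟩
              · exact Or.inr h
          _ ≤ _ := measure_union_le _ _
      have h1' : m ≤ (μ (S ∩ E)).toReal + (μ Eᶜ).toReal := by
        rw [← ENNReal.toReal_add (measure_ne_top _ _) (measure_ne_top _ _)]
        exact ENNReal.toReal_mono
          (ENNReal.add_ne_top.mpr ⟨measure_ne_top _ _, measure_ne_top _ _⟩) h1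
      linarith
    have hind : ∫ x, (S ∩ E).indicator (fun _ => 2 * t) x ∂μ
        = (μ (S ∩ E)).toReal * (2 * t) := by
      rw [integral_indicator_const _ (hS.inter hEm), smul_eq_mul]; rfl
    have hlow : (μ (S ∩ E)).toReal * (2 * t)
        ≤ ∫ x, S.indicator (fun _ => (1:ℝ)) x * (1 - 2 * η x) ∂μ := by
      rw [← hind]
      apply integral_mono_of_nonneg
      · exact ae_of_all _ (fun x => Set.indicator_nonneg (fun _ _ => by positivity) x)
      · exact hInt
      · apply ae_of_all
        intro x
        by_cases hx : x ∈ S ∩ E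
        · simp only [Set.indicator_of_mem hx, Set.indicator_of_mem hx.1]
          have hxE : η x ≤ 1/2 - t := hx.2
          nlinarith
        · simp only [Set.indicator_of_notMem hx]
          exact hnn x
    have hkey : α * ((1 - α) / A) ^ ((1 - α) / α) * m ^ (1 / α) = α * m * t := by
      rw [ht, show (1 - α) * m / A = ((1 - α) / A) * m by ring,
        Real.mul_rpow (by positivity) hm0]
      have hms : m ^ (1 / α) = m * m ^ ((1 - α) / α) := by
        rw [show (1:ℝ) / α = 1 + (1 - α) / α by field_simp; ring,
          Real.rpow_add hmpos, Real.rpow_one]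
      rw [hms]; ring
    rw [hkey]
    calc α * m * t ≤ (μ (S ∩ E)).toReal * (2 * t) := by
          nlinarith [mul_le_mul_of_nonneg_right hmeas2 htpos.le,
            ENNReal.toReal_nonneg (a := μ (S ∩ E))]
      _ ≤ _ := hlow
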